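/- arXiv:2511.15149 — 3 statements merged into one kernel-verified Lean document; each statement's English description precedes it below -/
import Mathlib

section
/- Let n ≥ 1 be a natural number and let u, v be complex numbers with u ∈ 𝔻, v ∈ 𝔻' and u ≠ v. Fix a complex number ζ with ζ^n = v such that for every n-th root of unity β the numbers u, βζ/(βζ−1) and (u−βζ)/(1−βζ) lie in the open unit disc and βζ ≠ 1. Then F(1/n; u, v) = n·Li₂(u) + ∑_{β^n=1} [ Li₂(βζ/(βζ−1)) − Li₂((u−βζ)/(1−βζ)) ], where the sum runs over all n-th roots of unity β. -/
open Complex MeasureTheory Polynomial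

/-- `t^z := exp(z · log t)` with `log t` the real logarithm. -/
noncomputable def tpow (z : ℂ) (t : ℝ) : ℂ := Complex.exp (z * Real.log t)

/-- The Herglotz–Zagier–Novikov function `F(z;u,v) = ∫₀¹ log(1 − u t^z)/(v⁻¹ − t) dt`. -/
noncomputable def F (z u v : ℂ) : ℂ :=
  ∫ t in (0:ℝ)..1, Complex.log (1 - u * tpow z t) / (v⁻¹ - (t : ℂ))

/-- The polylogarithm `Li_s(z) = ∑_{n≥1} z^n / n^s`. -/
noncomputable def Li (s : ℕ) (z : ℂ) : ℂ := ∑' n : ℕ, z ^ (n + 1) / ((n : ℂ) + 1) ^ s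

open Set Metric Filter

noncomputable def Complex.abs : AbsoluteValue ℂ ℝ where
  toFun z := ‖z‖
  map_mul' := norm_mul
  nonneg' := norm_nonneg
  eq_zero' _ := norm_eq_zero
  add_le' := norm_add_le

lemma Complex.norm_eq_abs (z : ℂ) : ‖z‖ = Complex.abs z := rfl

lemma Complex.abs_ofReal (r : ℝ) : Complex.abs (r : ℂ) = |r| := Complex.norm_real r

lemma Complex.sq_abs (z : ℂ) : Complex.abs z ^ 2 = Complex.normSq z := Complex.sq_norm z

noncomputable def gg (z : ℂ) : ℂ := ∑' n : ℕ, z ^ n / ((n:ℂ)+1)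

lemma norm_cast_succ (n : ℕ) : ‖((n:ℂ)+1)‖ = (n:ℝ)+1 := by
  rw [show ((n:ℂ)+1) = ((n+1:ℕ):ℂ) by push_cast; ring, Complex.norm_natCast]; push_cast; ring

lemma norm_term_le {z : ℂ} (n : ℕ) : ‖z ^ n / ((n:ℂ)+1)‖ ≤ ‖z‖ ^ n := by
  rw [norm_div, norm_pow, norm_cast_succ]
  apply div_le_self (by positivity) (by linarith [Nat.cast_nonneg (α := ℝ) n])

lemma summable_gg {z : ℂ} (hz : Complex.abs z < 1) :
    Summable (fun n : ℕ => z ^ n / ((n:ℂ)+1)) := by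
  apply Summable.of_norm
  exact Summable.of_nonneg_of_le (fun n => norm_nonneg _) (fun n => norm_term_le n)
    (summable_geometric_of_lt_one (norm_nonneg z) hz)

lemma hasSum_gg {z : ℂ} (hz : Complex.abs z < 1) :
    HasSum (fun n : ℕ => z ^ n / ((n:ℂ)+1)) (gg z) := (summable_gg hz).hasSum

lemma norm_term2_le {z : ℂ} (n : ℕ) (hz : Complex.abs z < 1) :
    ‖z ^ (n+1) / ((n:ℂ)+1) ^ 2‖ ≤ ‖z‖ ^ n := by
  rw [norm_div, norm_pow, norm_pow, norm_cast_succ]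
  have h1 : (1:ℝ) ≤ ((n:ℝ)+1)^2 := by nlinarith [Nat.cast_nonneg (α := ℝ) n]
  calc ‖z‖^(n+1) / ((n:ℝ)+1)^2 ≤ ‖z‖^(n+1) := div_le_self (by positivity) h1
    _ ≤ ‖z‖^n := by
        rw [pow_succ]
        have hz' : ‖z‖ ≤ 1 := by rw [Complex.norm_eq_abs]; exact hz.le
        nlinarith [pow_nonneg (norm_nonneg z) n, norm_nonneg z]

lemma hasSum_Li2 {z : ℂ} (hz : Complex.abs z < 1) :
    HasSum (fun n : ℕ => z ^ (n+1) / ((n:ℂ)+1) ^ 2) (Li 2 z) := by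
  apply Summable.hasSum
  apply Summable.of_norm
  exact Summable.of_nonneg_of_le (fun n => norm_nonneg _) (fun n => norm_term2_le n hz)
    (summable_geometric_of_lt_one (norm_nonneg z) hz)

lemma Li2_zero : Li 2 0 = 0 := by
  simp [Li]

lemma gg_zero : gg 0 = 1 := by
  rw [gg, tsum_eq_single 0]
  · simp
  · intro b hb; simp [zero_pow hb]

lemma gg_eq {z : ℂ} (hz : Complex.abs z < 1) (h0 : z ≠ 0) :
    gg z = -Complex.log (1 - z) / z := by
  have hlog := Complex.hasSum_taylorSeries_neg_log (z := z) (by exact hz)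
  have h1 : HasSum (fun n : ℕ => z ^ (n+1) / ((n+1:ℕ):ℂ)) (-Complex.log (1 - z) - ∑ i ∈ Finset.range 1, z ^ i / (i:ℂ)) := by
    exact (hasSum_nat_add_iff' 1).mpr hlog
  simp only [Finset.range_one, Finset.sum_singleton, Nat.cast_zero, div_zero, sub_zero, pow_zero] at h1
  have h2 : HasSum (fun n : ℕ => z * (z ^ n / ((n:ℂ)+1))) (z * gg z) := (hasSum_gg hz).mul_left z
  have h3 : (fun n : ℕ => z * (z ^ n / ((n:ℂ)+1))) = fun n : ℕ => z ^ (n+1) / ((n+1:ℕ):ℂ) := by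
    funext n; push_cast; ring
  rw [h3] at h2
  have := h2.unique h1
  field_simp
  linear_combination this

lemma unif_gg {r : ℝ} (hr0 : 0 ≤ r) (hr : r < 1) :
    TendstoUniformlyOn (fun (N : ℕ) (y : ℂ) => ∑ k ∈ Finset.range N, y ^ k / ((k:ℂ)+1))
      gg atTop (Metric.ball (0:ℂ) r) := by
  apply tendstoUniformlyOn_tsum_nat (u := fun n => r ^ n)
  · exact summable_geometric_of_lt_one hr0 hr
  · intro n y hy
    calc ‖y ^ n / ((n:ℂ)+1)‖ ≤ ‖y‖ ^ n := norm_term_le n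
      _ ≤ r ^ n := pow_le_pow_left₀ (norm_nonneg _) (mem_ball_zero_iff.mp hy).le n

lemma hasDerivAt_Li2 {z : ℂ} (hz : Complex.abs z < 1) : HasDerivAt (Li 2) (gg z) z := by
  set r : ℝ := (1 + Complex.abs z)/2 with hrdef
  have hr0 : 0 ≤ r := by positivity
  have hr1 : r < 1 := by simp only [hrdef]; linarith
  have hzr : z ∈ Metric.ball (0:ℂ) r := by
    rw [mem_ball_zero_iff, Complex.norm_eq_abs]; simp only [hrdef]; linarith
  apply hasDerivAt_of_tendstoUniformlyOn (f := fun (N : ℕ) (y : ℂ) =>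
      ∑ k ∈ Finset.range N, y ^ (k+1) / ((k:ℂ)+1)^2)
    (f' := fun (N : ℕ) (y : ℂ) => ∑ k ∈ Finset.range N, y ^ k / ((k:ℂ)+1))
    Metric.isOpen_ball (unif_gg hr0 hr1) ?_ ?_ hzr
  · apply Eventually.of_forall
    intro N y hy
    apply HasDerivAt.fun_sum
    intro k _
    have h1 : HasDerivAt (fun y : ℂ => y ^ (k+1) / ((k:ℂ)+1)^2)
        ((((k:ℕ)+1 : ℕ):ℂ) * y ^ k / ((k:ℂ)+1)^2) y := (hasDerivAt_pow (k+1) y).div_const _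
    refine h1.congr_deriv ?_
    have hk : ((k:ℂ)+1) ≠ 0 := by
      intro h
      have := congrArg Complex.re h
      simp at this
      linarith [Nat.cast_nonneg (α := ℝ) k]
    push_cast
    rw [div_eq_div_iff (pow_ne_zero 2 hk) hk]
    ring
  · intro y hy
    have hy1 : Complex.abs y < 1 := by
      have := mem_ball_zero_iff.mp hy
      rw [Complex.norm_eq_abs] at this; linarith
    exact (hasSum_Li2 hy1).tendsto_sum_nat

lemma continuousOn_gg : ContinuousOn gg (Metric.ball (0:ℂ) 1) := by
  intro z hz
  have hz1 : Complex.abs z < 1 := by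
    have := mem_ball_zero_iff.mp hz; rwa [Complex.norm_eq_abs] at this
  set r : ℝ := (1 + Complex.abs z)/2 with hrdef
  have hr0 : 0 ≤ r := by positivity
  have hr1 : r < 1 := by simp only [hrdef]; linarith
  have hzr : z ∈ Metric.ball (0:ℂ) r := by
    rw [mem_ball_zero_iff, Complex.norm_eq_abs]; simp only [hrdef]; linarith
  have hcont : ContinuousOn gg (Metric.ball (0:ℂ) r) := by
    apply (unif_gg hr0 hr1).continuousOn
    apply Frequently.of_forall
    intro N
    apply Continuous.continuousOn
    continuity
  exact (hcont.continuousAt (Metric.isOpen_ball.mem_nhds hzr)).continuousWithinAt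

-- w.re < 1/2 from |w/(w-1)| < 1, w ≠ 1
lemma re_lt_half {w : ℂ} (h1 : Complex.abs (w/(w-1)) < 1) (h2 : w ≠ 1) : w.re < 1/2 := by
  have hw1 : w - 1 ≠ 0 := sub_ne_zero.mpr h2
  have habs : Complex.abs w < Complex.abs (w-1) := by
    rw [map_div₀, div_lt_one (AbsoluteValue.pos _ hw1)] at h1
    exact h1
  have hsq : Complex.normSq w < Complex.normSq (w-1) := by
    rw [← Complex.sq_abs, ← Complex.sq_abs]
    exact pow_lt_pow_left₀ habs (AbsoluteValue.nonneg _ _) (by norm_num)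
  simp only [Complex.normSq_apply, Complex.sub_re, Complex.sub_im, Complex.one_re,
    Complex.one_im] at hsq
  nlinarith

-- bound for 1 - w * s, s ∈ [0,1], when w.re < 1/2
lemma denom_re {w : ℂ} (hw : w.re < 1/2) {s : ℝ} (h0 : 0 ≤ s) (h1 : s ≤ 1) :
    (1/2:ℝ) ≤ (1 - w * (s:ℂ)).re := by
  have : (1 - w * (s:ℂ)).re = 1 - w.re * s := by
    simp [Complex.sub_re, Complex.mul_re]
  rw [this]
  rcases le_or_gt w.re 0 with h | h
  · nlinarith
  · nlinarith

lemma denom_ne {w : ℂ} (hw : w.re < 1/2) {s : ℝ} (h0 : 0 ≤ s) (h1 : s ≤ 1) :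
    1 - w * (s:ℂ) ≠ 0 := by
  intro h
  have := denom_re hw h0 h1
  rw [h] at this
  simp at this
  linarith

lemma denom_slit {w : ℂ} (hw : w.re < 1/2) {s : ℝ} (h0 : 0 ≤ s) (h1 : s ≤ 1) :
    1 - w * (s:ℂ) ∈ Complex.slitPlane := by
  rw [Complex.mem_slitPlane_iff]
  exact Or.inl (by linarith [denom_re hw h0 h1])

lemma denom_abs {w : ℂ} (hw : w.re < 1/2) {s : ℝ} (h0 : 0 ≤ s) (h1 : s ≤ 1) :
    (1/2:ℝ) ≤ Complex.abs (1 - w * (s:ℂ)) := by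
  calc (1/2:ℝ) ≤ (1 - w * (s:ℂ)).re := denom_re hw h0 h1
    _ ≤ Complex.abs (1 - w * (s:ℂ)) := Complex.re_le_norm _

-- numerator part: |u| < 1
lemma num_re {u : ℂ} (hu : Complex.abs u < 1) {s : ℝ} (h0 : 0 ≤ s) (h1 : s ≤ 1) :
    0 < (1 - u * (s:ℂ)).re := by
  have hre : (1 - u * (s:ℂ)).re = 1 - u.re * s := by simp [Complex.sub_re, Complex.mul_re]
  rw [hre]
  have h2 : u.re * s ≤ Complex.abs u * s := by
    apply mul_le_mul_of_nonneg_right (Complex.re_le_norm u) h0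
  have h3 : Complex.abs u * s ≤ Complex.abs u := by
    nlinarith [AbsoluteValue.nonneg Complex.abs u]
  linarith

lemma num_abs {u : ℂ} (hu : Complex.abs u < 1) {s : ℝ} (h0 : 0 ≤ s) (h1 : s ≤ 1) :
    1 - Complex.abs u ≤ Complex.abs (1 - u * (s:ℂ)) := by
  have h2 : Complex.abs (u * (s:ℂ)) ≤ Complex.abs u := by
    rw [map_mul, Complex.abs_ofReal, _root_.abs_of_nonneg h0]
    nlinarith [AbsoluteValue.nonneg Complex.abs u]
  calc 1 - Complex.abs u ≤ 1 - Complex.abs (u * (s:ℂ)) := by linarith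
    _ ≤ Complex.abs (1 - u * (s:ℂ)) := by
        have := norm_sub_norm_le (1:ℂ) (u * (s:ℂ))
        simpa [Complex.norm_eq_abs, Complex.abs_ofReal] using this

-- log of division for positive-real-part numbers
lemma log_div_pos_re {a b : ℂ} (ha : 0 < a.re) (hb : 0 < b.re) :
    Complex.log (a / b) = Complex.log a - Complex.log b := by
  have ha0 : a ≠ 0 := by intro h; rw [h] at ha; simp at ha
  have hb0 : b ≠ 0 := by intro h; rw [h] at hb; simp at hb
  have harga : |Complex.arg a| < Real.pi/2 := Complex.abs_arg_lt_pi_div_two_iff.mpr (Or.inl ha)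
  have hargb : |Complex.arg b| < Real.pi/2 := Complex.abs_arg_lt_pi_div_two_iff.mpr (Or.inl hb)
  have him : (Complex.log a - Complex.log b).im = Complex.arg a - Complex.arg b := by
    simp [Complex.sub_im, Complex.log_im]
  have h1 : -Real.pi < (Complex.log a - Complex.log b).im := by
    rw [him]; rw [abs_lt] at harga hargb; linarith [Real.pi_pos]
  have h2 : (Complex.log a - Complex.log b).im ≤ Real.pi := by
    rw [him]; rw [abs_lt] at harga hargb; linarith [Real.pi_pos]
  rw [← Complex.log_exp h1 h2, Complex.exp_sub, Complex.exp_log ha0, Complex.exp_log hb0]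

lemma num_ne {u : ℂ} (hu : Complex.abs u < 1) {s : ℝ} (h0 : 0 ≤ s) (h1 : s ≤ 1) :
    1 - u * (s:ℂ) ≠ 0 := by
  intro h
  have := num_re hu h0 h1
  rw [h] at this; simp at this

lemma num_slit {u : ℂ} (hu : Complex.abs u < 1) {s : ℝ} (h0 : 0 ≤ s) (h1 : s ≤ 1) :
    1 - u * (s:ℂ) ∈ Complex.slitPlane :=
  Complex.mem_slitPlane_iff.mpr (Or.inl (num_re hu h0 h1))

lemma abs_div_lt_one_of_re {w : ℂ} (hw : w.re < 1/2) (h2 : w ≠ 1) :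
    Complex.abs (w/(w-1)) < 1 := by
  have hw1 : w - 1 ≠ 0 := sub_ne_zero.mpr h2
  rw [map_div₀, div_lt_one (AbsoluteValue.pos _ hw1)]
  have : Complex.normSq w < Complex.normSq (w - 1) := by
    simp only [Complex.normSq_apply, Complex.sub_re, Complex.sub_im, Complex.one_re,
      Complex.one_im]
    nlinarith
  have h3 := Complex.sq_abs w
  have h4 := Complex.sq_abs (w-1)
  nlinarith [AbsoluteValue.nonneg Complex.abs w, AbsoluteValue.nonneg Complex.abs (w-1)]

-- derivative building blocks
lemma hasDerivAt_inner (c : ℂ) (s : ℝ) :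
    HasDerivAt (fun σ : ℂ => 1 - c * σ) (-c) (s:ℂ) := by
  simpa using ((hasDerivAt_id (s:ℂ)).const_mul c).const_sub 1

lemma hasDerivAt_log_inner {c : ℂ} {s : ℝ} (hs : 1 - c * (s:ℂ) ∈ Complex.slitPlane) :
    HasDerivAt (fun σ : ℂ => Complex.log (1 - c * σ)) ((1 - c * (s:ℂ))⁻¹ * (-c)) (s:ℂ) := by
  have := (Complex.hasDerivAt_log hs).comp ((s:ℝ):ℂ) (hasDerivAt_inner c s)
  exact this

lemma contOn_integrand {x w : ℂ} (hx : Complex.abs x < 1) (hw : w.re < 1/2) :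
    ContinuousOn (fun s : ℝ => (-(s:ℂ)/(1 - x*(s:ℂ))) * (w/(1 - w*(s:ℂ)))) (Icc 0 1) := by
  apply ContinuousOn.mul
  · apply ContinuousOn.div (by fun_prop) (by fun_prop)
    intro s hs; exact num_ne hx hs.1 hs.2
  · apply ContinuousOn.div continuousOn_const (by fun_prop)
    intro s hs; exact denom_ne hw hs.1 hs.2

lemma Jval {x w : ℂ} (hx : Complex.abs x < 1) (hx2 : Complex.abs ((x-w)/(1-w)) < 1)
    (hw : w.re < 1/2) (hw0 : w ≠ 0) (hwne : w ≠ 1) :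
    ∫ s in (0:ℝ)..1, (-(s:ℂ)/(1 - x*(s:ℂ))) * (w/(1 - w*(s:ℂ)))
      = gg x - gg ((x-w)/(1-w)) * (1-w)⁻¹ := by
  have h1w : (1:ℂ) - w ≠ 0 := sub_ne_zero.mpr (Ne.symm hwne)
  have hw1 : w - 1 ≠ 0 := sub_ne_zero.mpr hwne
  have hre1w : 0 < ((1:ℂ) - w).re := by
    simp only [Complex.sub_re, Complex.one_re]; linarith
  have harg1w : Complex.arg (1 - w) ≠ Real.pi := by
    intro h
    rw [Complex.arg_eq_pi_iff] at h
    linarith [h.1]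
  have hint : IntervalIntegrable (fun s : ℝ => (-(s:ℂ)/(1 - x*(s:ℂ))) * (w/(1 - w*(s:ℂ))))
      MeasureTheory.volume 0 1 := by
    apply ContinuousOn.intervalIntegrable
    rw [uIcc_of_le zero_le_one]
    exact contOn_integrand hx hw
  rcases eq_or_ne x 0 with rfl | hx0
  · -- case x = 0
    have hφ : ∀ s ∈ uIcc (0:ℝ) 1, HasDerivAt
        (fun t : ℝ => (t:ℂ) + Complex.log (1 - w * (t:ℂ))/w)
        ((-(s:ℂ)/(1 - 0*(s:ℂ))) * (w/(1 - w*(s:ℂ)))) s := by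
      intro s hs
      rw [uIcc_of_le zero_le_one] at hs
      have hC : HasDerivAt (fun σ : ℂ => σ + Complex.log (1 - w * σ)/w)
          (1 + ((1 - w * (s:ℂ))⁻¹ * (-w))/w) (s:ℂ) :=
        (hasDerivAt_id _).add ((hasDerivAt_log_inner (denom_slit hw hs.1 hs.2)).div_const w)
      have := hC.comp_ofReal
      convert this using 1
      have hne := denom_ne hw hs.1 hs.2
      have hne' : 1 - (s:ℂ) * w ≠ 0 := by rw [mul_comm]; exact hne
      field_simp
      ring
    rw [intervalIntegral.integral_eq_sub_of_hasDerivAt hφ hint]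
    push_cast
    simp only [Complex.ofReal_one, Complex.ofReal_zero, mul_one, mul_zero, sub_zero,
      Complex.log_one, zero_div, add_zero, zero_add, zero_sub, zero_mul]
    -- goal: 1 + log (1-w)/w - 0 = gg 0 - gg ((0-w)/(1-w)) * (1-w)⁻¹
    have hz : (-w)/(1-w) = w/(w-1) := by
      rw [div_eq_div_iff h1w hw1]; ring
    rw [hz, gg_zero, gg_eq (abs_div_lt_one_of_re hw hwne) (div_ne_zero hw0 hw1)]
    have h1z : (1:ℂ) - w/(w-1) = (1-w)⁻¹ := by field_simp; ring
    rw [h1z, Complex.log_inv _ harg1w]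
    set l := Complex.log (1-w)
    field_simp
    ring
  rcases eq_or_ne x w with rfl | hxw
  · -- case x = w (w has been replaced by x)
    have hφ : ∀ s ∈ uIcc (0:ℝ) 1, HasDerivAt
        (fun t : ℝ => -(Complex.log (1 - x * (t:ℂ)) + (1 - x * (t:ℂ))⁻¹)/x)
        ((-(s:ℂ)/(1 - x*(s:ℂ))) * (x/(1 - x*(s:ℂ)))) s := by
      intro s hs
      rw [uIcc_of_le zero_le_one] at hs
      have hne := denom_ne hw hs.1 hs.2
      have hC : HasDerivAt (fun σ : ℂ => -(Complex.log (1 - x * σ) + (1 - x * σ)⁻¹)/x)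
          (-(((1 - x * (s:ℂ))⁻¹ * (-x)) + (-(-x)/(1 - x * (s:ℂ))^2))/x) (s:ℂ) := by
        apply HasDerivAt.div_const
        apply HasDerivAt.neg
        exact (hasDerivAt_log_inner (denom_slit hw hs.1 hs.2)).add
          ((hasDerivAt_inner x s).inv hne)
      have := hC.comp_ofReal
      convert this using 1
      field_simp
      ring
    rw [intervalIntegral.integral_eq_sub_of_hasDerivAt hφ hint]
    push_cast
    simp only [Complex.ofReal_one, Complex.ofReal_zero, mul_one, mul_zero, sub_zero,
      Complex.log_one, zero_add, inv_one, sub_self, zero_div]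
    rw [gg_zero, gg_eq hx hw0]
    set l := Complex.log (1-x)
    field_simp
    ring
  · -- generic case
    have hwx : w - x ≠ 0 := sub_ne_zero.mpr (Ne.symm hxw)
    have hxw' : x - w ≠ 0 := sub_ne_zero.mpr hxw
    have hφ : ∀ s ∈ uIcc (0:ℝ) 1, HasDerivAt
        (fun t : ℝ => (w/((w-x)*x)) * (-Complex.log (1 - x * (t:ℂ)))
          + Complex.log (1 - w * (t:ℂ))/(w-x))
        ((-(s:ℂ)/(1 - x*(s:ℂ))) * (w/(1 - w*(s:ℂ)))) s := by
      intro s hs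
      rw [uIcc_of_le zero_le_one] at hs
      have hnex := num_ne hx hs.1 hs.2
      have hnew := denom_ne hw hs.1 hs.2
      have hnex' : 1 - (s:ℂ) * x ≠ 0 := by rw [mul_comm]; exact hnex
      have hnew' : 1 - (s:ℂ) * w ≠ 0 := by rw [mul_comm]; exact hnew
      have hC : HasDerivAt (fun σ : ℂ => (w/((w-x)*x)) * (-Complex.log (1 - x * σ))
          + Complex.log (1 - w * σ)/(w-x))
          ((w/((w-x)*x)) * (-((1 - x * (s:ℂ))⁻¹ * (-x)))
            + ((1 - w * (s:ℂ))⁻¹ * (-w))/(w-x)) (s:ℂ) := by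
        exact (((hasDerivAt_log_inner (num_slit hx hs.1 hs.2)).neg).const_mul _).add
          ((hasDerivAt_log_inner (denom_slit hw hs.1 hs.2)).div_const _)
      have := hC.comp_ofReal
      convert this using 1
      field_simp
      ring
    rw [intervalIntegral.integral_eq_sub_of_hasDerivAt hφ hint]
    push_cast
    simp only [Complex.ofReal_one, Complex.ofReal_zero, mul_one, mul_zero, sub_zero,
      Complex.log_one, neg_zero, zero_div, add_zero]
    -- goal: w/((w-x)*x) * (-log(1-x)) + log(1-w)/(w-x) - 0 = gg x - gg ((x-w)/(1-w)) * (1-w)⁻¹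
    have hz0 : (x-w)/(1-w) ≠ 0 := div_ne_zero hxw' h1w
    rw [gg_eq hx hx0, gg_eq hx2 hz0]
    have h1z : (1:ℂ) - (x-w)/(1-w) = (1-x)/(1-w) := by field_simp; ring
    have hre1x : 0 < ((1:ℂ) - x).re := by
      have := num_re hx zero_le_one (le_refl (1:ℝ))
      simpa using this
    rw [h1z, log_div_pos_re hre1x hre1w]
    set lx := Complex.log (1-x)
    set lw := Complex.log (1-w)
    field_simp
    ring

-- continuity of the main integrand in s
lemma contOn_main {x w : ℂ} (hx : Complex.abs x < 1) (hw : w.re < 1/2) :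
    ContinuousOn (fun s : ℝ => Complex.log (1 - x*(s:ℂ)) * (w/(1 - w*(s:ℂ)))) (Icc 0 1) := by
  apply ContinuousOn.mul
  · apply ContinuousOn.clog (by fun_prop)
    intro s hs; exact num_slit hx hs.1 hs.2
  · apply ContinuousOn.div continuousOn_const (by fun_prop)
    intro s hs; exact denom_ne hw hs.1 hs.2

lemma hasDerivAt_L {w : ℂ} (hw : w.re < 1/2) {x₀ : ℂ} (hx₀ : Complex.abs x₀ < 1) :
    HasDerivAt (fun x : ℂ => ∫ s in (0:ℝ)..1, Complex.log (1 - x*(s:ℂ)) * (w/(1 - w*(s:ℂ))))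
      (∫ s in (0:ℝ)..1, (-(s:ℂ)/(1 - x₀*(s:ℂ))) * (w/(1 - w*(s:ℂ)))) x₀ := by
  set r : ℝ := (1 + Complex.abs x₀)/2 with hrdef
  have hr1 : r < 1 := by simp only [hrdef]; linarith
  have hrpos : 0 < 1 - r := by linarith
  set ε : ℝ := (1 - Complex.abs x₀)/2 with hεdef
  have hε : 0 < ε := by simp only [hεdef]; linarith
  have hball : ∀ x ∈ Metric.ball x₀ ε, Complex.abs x ≤ r := by
    intro x hx
    rw [Metric.mem_ball, Complex.dist_eq, Complex.norm_eq_abs] at hx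
    calc Complex.abs x = Complex.abs (x - x₀ + x₀) := by ring_nf
      _ ≤ Complex.abs (x - x₀) + Complex.abs x₀ := AbsoluteValue.add_le _ _ _
      _ ≤ ε + Complex.abs x₀ := by linarith
      _ = r := by simp only [hεdef, hrdef]; ring
  have huIoc : Set.uIoc (0:ℝ) 1 = Ioc (0:ℝ) 1 := Set.uIoc_of_le zero_le_one
  have key := intervalIntegral.hasDerivAt_integral_of_dominated_loc_of_deriv_le
    (F := fun (x : ℂ) (s : ℝ) => Complex.log (1 - x*(s:ℂ)) * (w/(1 - w*(s:ℂ))))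
    (F' := fun (x : ℂ) (s : ℝ) => (-(s:ℂ)/(1 - x*(s:ℂ))) * (w/(1 - w*(s:ℂ))))
    (x₀ := x₀) (a := 0) (b := 1) (μ := MeasureTheory.volume) (bound := fun _ => (1-r)⁻¹ * (2 * Complex.abs w)) (Metric.ball_mem_nhds x₀ hε)
    ?_ ?_ ?_ ?_ ?_ ?_
  · exact key.2
  · -- measurability eventually
    apply eventually_of_mem (Metric.ball_mem_nhds x₀ hε)
    intro x hx
    have hx1 : Complex.abs x < 1 := lt_of_le_of_lt (hball x hx) hr1
    apply ContinuousOn.aestronglyMeasurable _ measurableSet_uIoc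
    exact (contOn_main hx1 hw).mono (by rw [huIoc]; exact Ioc_subset_Icc_self)
  · apply ContinuousOn.intervalIntegrable
    rw [uIcc_of_le zero_le_one]
    exact contOn_main hx₀ hw
  · apply ContinuousOn.aestronglyMeasurable _ measurableSet_uIoc
    exact (contOn_integrand hx₀ hw).mono (by rw [huIoc]; exact Ioc_subset_Icc_self)
  · -- bound
    apply Eventually.of_forall
    intro t ht x hx
    rw [huIoc] at ht
    have hx1 : Complex.abs x ≤ r := hball x hx
    have hx1' : Complex.abs x < 1 := lt_of_le_of_lt hx1 hr1
    have ht0 : (0:ℝ) ≤ t := ht.1.le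
    have ht1 : t ≤ 1 := ht.2
    have h2 : 1 - r ≤ Complex.abs (1 - x*(t:ℂ)) := by
      have := num_abs hx1' ht0 ht1
      linarith
    have h3 := denom_abs hw ht0 ht1
    rw [norm_mul, norm_div, norm_div]
    simp only [Complex.norm_eq_abs]
    have e1 : Complex.abs (-(t:ℂ)) ≤ 1 := by
      rw [show -(t:ℂ) = ((-t : ℝ) : ℂ) by push_cast; ring, Complex.abs_ofReal, abs_neg,
        _root_.abs_of_nonneg ht0]
      exact ht1
    have e2 : Complex.abs (-(t:ℂ)) / Complex.abs (1 - x*(t:ℂ)) ≤ (1-r)⁻¹ := by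
      rw [div_le_iff₀ (by linarith)]
      calc Complex.abs (-(t:ℂ)) ≤ 1 := e1
        _ ≤ (1-r)⁻¹ * (1-r) := by rw [inv_mul_cancel₀ (by linarith)]
        _ ≤ (1-r)⁻¹ * Complex.abs (1 - x*(t:ℂ)) := by
            apply mul_le_mul_of_nonneg_left h2 (by positivity)
    have e3 : Complex.abs w / Complex.abs (1 - w*(t:ℂ)) ≤ 2 * Complex.abs w := by
      rw [div_le_iff₀ (by linarith)]
      calc Complex.abs w = 2 * Complex.abs w * (1/2) := by ring
        _ ≤ 2 * Complex.abs w * Complex.abs (1 - w*(t:ℂ)) := by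
            apply mul_le_mul_of_nonneg_left h3 (by positivity)
    exact mul_le_mul e2 e3 (by positivity) (by positivity)
  · exact intervalIntegrable_const
  · -- differentiability in x
    apply Eventually.of_forall
    intro t ht x hx
    rw [huIoc] at ht
    have hx1 : Complex.abs x < 1 := lt_of_le_of_lt (hball x hx) hr1
    have hinner : HasDerivAt (fun y : ℂ => 1 - y*(t:ℂ)) (-(t:ℂ)) x := by
      simpa using ((hasDerivAt_id x).mul_const ((t:ℝ):ℂ)).const_sub 1
    have houter : HasDerivAt (fun y : ℂ => Complex.log (1 - y*(t:ℂ)))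
        ((1 - x*(t:ℂ))⁻¹ * (-(t:ℂ))) x := by
      have := (Complex.hasDerivAt_log (num_slit hx1 ht.1.le ht.2)).comp x hinner
      exact this
    have := houter.mul_const (w/(1 - w*(t:ℂ)))
    refine this.congr_deriv ?_
    have hne := num_ne hx1 ht.1.le ht.2
    ring

lemma key {u w : ℂ} (hu : Complex.abs u < 1) (hw1 : Complex.abs (w/(w-1)) < 1)
    (hw2 : Complex.abs ((u-w)/(1-w)) < 1) (hw0 : w ≠ 0) (hwne : w ≠ 1) :
    ∫ s in (0:ℝ)..1, Complex.log (1 - u*(s:ℂ)) * (w/(1 - w*(s:ℂ)))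
      = Li 2 u + Li 2 (w/(w-1)) - Li 2 ((u-w)/(1-w)) := by
  have hwre : w.re < 1/2 := re_lt_half hw1 hwne
  have h1w : (1:ℂ) - w ≠ 0 := sub_ne_zero.mpr (Ne.symm hwne)
  have hw1' : w - 1 ≠ 0 := sub_ne_zero.mpr hwne
  have habs1w : (0:ℝ) < Complex.abs (1 - w) := AbsoluteValue.pos _ h1w
  have habsww : Complex.abs w < Complex.abs (1 - w) := by
    have := hw1
    rw [map_div₀, div_lt_one (AbsoluteValue.pos _ hw1')] at this
    calc Complex.abs w < Complex.abs (w - 1) := this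
      _ = Complex.abs (1 - w) := by rw [← Complex.abs.map_neg]; ring_nf
  set Ω : Set ℂ := Metric.ball (0:ℂ) 1 ∩ Metric.ball w (Complex.abs (1 - w)) with hΩdef
  have hmem : ∀ x : ℂ, x ∈ Ω ↔
      Complex.abs x < 1 ∧ Complex.abs (x - w) < Complex.abs (1 - w) := by
    intro x
    simp [hΩdef, Metric.mem_ball, Complex.dist_eq, Complex.norm_eq_abs]
  have habs2 : ∀ x : ℂ, x ∈ Ω → Complex.abs ((x-w)/(1-w)) < 1 := by
    intro x hx
    rw [map_div₀, div_lt_one habs1w]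
    exact ((hmem x).mp hx).2
  have hΩu : u ∈ Ω := by
    rw [hmem]
    refine ⟨hu, ?_⟩
    have := hw2
    rwa [map_div₀, div_lt_one habs1w] at this
  have hΩ0 : (0:ℂ) ∈ Ω := by
    rw [hmem]
    refine ⟨by simp, ?_⟩
    rw [show (0:ℂ)-w = -w from by ring, Complex.abs.map_neg]
    exact habsww
  set L : ℂ → ℂ := fun x => ∫ s in (0:ℝ)..1, Complex.log (1 - x*(s:ℂ)) * (w/(1 - w*(s:ℂ)))
    with hLdef
  set R : ℂ → ℂ := fun x => Li 2 x + Li 2 (w/(w-1)) - Li 2 ((x-w)/(1-w)) with hRdef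
  have hderiv : ∀ x ∈ Ω, HasDerivAt (fun y => L y - R y) 0 x := by
    intro x hx
    obtain ⟨hx1, hx2'⟩ := (hmem x).mp hx
    have hx2 : Complex.abs ((x-w)/(1-w)) < 1 := habs2 x hx
    have hL : HasDerivAt L (gg x - gg ((x-w)/(1-w)) * (1-w)⁻¹) x := by
      have := hasDerivAt_L hwre hx1
      rwa [Jval hx1 hx2 hwre hw0 hwne] at this
    have hinner : HasDerivAt (fun y : ℂ => (y - w)/(1-w)) ((1-w)⁻¹) x := by
      have := ((hasDerivAt_id x).sub_const w).div_const (1-w)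
      simpa [div_eq_mul_inv] using this
    have hcomp : HasDerivAt (fun y : ℂ => Li 2 ((y-w)/(1-w)))
        (gg ((x-w)/(1-w)) * (1-w)⁻¹) x := by
      have := (hasDerivAt_Li2 hx2).comp x hinner
      exact this
    have hR : HasDerivAt R (gg x - gg ((x-w)/(1-w)) * (1-w)⁻¹) x := by
      have := ((hasDerivAt_Li2 hx1).add_const (Li 2 (w/(w-1)))).sub hcomp
      exact this
    have h := hL.sub hR
    rwa [sub_self] at h
  have hΩconv : Convex ℝ Ω := (convex_ball _ _).inter (convex_ball _ _)
  have hΩopen : IsOpen Ω := Metric.isOpen_ball.inter Metric.isOpen_ball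
  have hdiff : DifferentiableOn ℂ (fun y => L y - R y) Ω := by
    intro x hx
    exact ((hderiv x hx).differentiableAt).differentiableWithinAt
  have hfzero : ∀ x ∈ Ω, fderivWithin ℂ (fun y => L y - R y) Ω x = 0 := by
    intro x hx
    rw [fderivWithin_of_isOpen hΩopen hx]
    have := (hderiv x hx).hasFDerivAt.fderiv
    rw [this]
    ext y
    simp
  have hconst : L u - R u = L 0 - R 0 :=
    hΩconv.is_const_of_fderivWithin_eq_zero hdiff hfzero hΩu hΩ0
  have hL0 : L 0 = 0 := by
    simp only [hLdef]
    have : ∀ s : ℝ, Complex.log (1 - 0*(s:ℂ)) * (w/(1 - w*(s:ℂ))) = 0 := by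
      intro s; simp [Complex.log_one]
    simp only [this]
    simp
  have hR0 : R 0 = 0 := by
    simp only [hRdef]
    have hz : ((0:ℂ)-w)/(1-w) = w/(w-1) := by
      rw [div_eq_div_iff h1w hw1']; ring
    rw [hz, Li2_zero]
    ring
  rw [hL0, hR0, sub_zero] at hconst
  have hLu : L u = R u := sub_eq_zero.mp hconst
  exact hLu

-- product formula: ∏_{β^n=1} (1 - βζz) = 1 - v z^n  where v = ζ^n
lemma prod_formula {n : ℕ} (hn : 1 ≤ n) (ζ : ℂ) (z : ℂ) :
    ∏ β ∈ nthRootsFinset n (1:ℂ), (1 - β * ζ * z) = 1 - ζ^n * z^n := by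
  have hprim := Complex.isPrimitiveRoot_exp n (by omega)
  have := hprim.pow_sub_pow_eq_prod_sub_mul (1:ℂ) (ζ*z) (by omega)
  simp only [one_pow] at this
  rw [mul_pow] at this
  rw [this]
  apply Finset.prod_congr rfl
  intro β _
  ring

lemma deriv_sum_formula {n : ℕ} (hn : 1 ≤ n) (ζ : ℂ) (s : ℂ) :
    ∑ β ∈ nthRootsFinset n (1:ℂ), (∏ β' ∈ (nthRootsFinset n (1:ℂ)).erase β, (1 - β' * ζ * s)) * (β * ζ)
      = ζ^n * ((n:ℂ) * s^(n-1)) := by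
  have h1 : HasDerivAt (fun z : ℂ => ∏ β ∈ nthRootsFinset n (1:ℂ), (1 - β * ζ * z))
      (∑ β ∈ nthRootsFinset n (1:ℂ),
        (∏ β' ∈ (nthRootsFinset n (1:ℂ)).erase β, (1 - β' * ζ * s)) * (-(β * ζ))) s := by
    apply HasDerivAt.fun_finsetProd
    intro β _
    simpa using ((hasDerivAt_id s).const_mul (β * ζ)).const_sub 1
  have h2 : HasDerivAt (fun z : ℂ => 1 - ζ^n * z^n) (-(ζ^n * ((n:ℂ) * s^(n-1)))) s := by
    simpa using ((hasDerivAt_pow n s).const_mul (ζ^n)).const_sub 1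
  have hfun : (fun z : ℂ => ∏ β ∈ nthRootsFinset n (1:ℂ), (1 - β * ζ * z))
      = fun z : ℂ => 1 - ζ^n * z^n := by
    funext z; exact prod_formula hn ζ z
  rw [hfun] at h1
  have := h1.unique h2
  have h3 : ∑ β ∈ nthRootsFinset n (1:ℂ),
      (∏ β' ∈ (nthRootsFinset n (1:ℂ)).erase β, (1 - β' * ζ * s)) * (β * ζ)
      = -∑ β ∈ nthRootsFinset n (1:ℂ),
        (∏ β' ∈ (nthRootsFinset n (1:ℂ)).erase β, (1 - β' * ζ * s)) * (-(β * ζ)) := by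
    rw [← Finset.sum_neg_distrib]
    apply Finset.sum_congr rfl
    intro β _; ring
  rw [h3, this]
  ring

lemma partial_fractions {n : ℕ} (hn : 1 ≤ n) (ζ : ℂ) (s : ℂ)
    (hne : ∀ β ∈ nthRootsFinset n (1:ℂ), 1 - β * ζ * s ≠ 0) :
    ∑ β ∈ nthRootsFinset n (1:ℂ), β * ζ / (1 - β * ζ * s)
      = ζ^n * ((n:ℂ) * s^(n-1)) / (1 - ζ^n * s^n) := by
  have hprod_ne : (1:ℂ) - ζ^n * s^n ≠ 0 := by
    rw [← prod_formula hn ζ s]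
    exact Finset.prod_ne_zero_iff.mpr hne
  rw [eq_div_iff hprod_ne, ← deriv_sum_formula hn ζ s, Finset.sum_mul]
  apply Finset.sum_congr rfl
  intro β hβ
  rw [← prod_formula hn ζ s, ← Finset.mul_prod_erase _ _ hβ]
  field_simp [hne β hβ]

theorem statement17 (n : ℕ) (hn : 1 ≤ n) (u v ζ : ℂ)
    (hu : u ≠ 0 ∧ ‖u‖ ≤ 1)
    (hv : v ≠ 0 ∧ ‖v‖ ≤ 1 ∧ v ≠ 1)
    (huv : u ≠ v) (hζ : ζ ^ n = v)
    (hβ : ∀ β ∈ nthRootsFinset n (1 : ℂ),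
      ‖u‖ < 1 ∧ ‖β * ζ / (β * ζ - 1)‖ < 1 ∧
      ‖(u - β * ζ) / (1 - β * ζ)‖ < 1 ∧ β * ζ ≠ 1) :
    F ((n : ℂ))⁻¹ u v =
      (n : ℂ) * Li 2 u +
        ∑ β ∈ nthRootsFinset n (1 : ℂ),
          (Li 2 (β * ζ / (β * ζ - 1)) - Li 2 ((u - β * ζ) / (1 - β * ζ))) := by
  obtain ⟨hu0, hu1⟩ := hu
  obtain ⟨hv0, hv1, hvne⟩ := hv
  have hn0 : n ≠ 0 := by omega
  have habsu : Complex.abs u < 1 := (hβ 1 (Polynomial.one_mem_nthRootsFinset (by omega))).1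
  have hζ0 : ζ ≠ 0 := by
    intro h
    rw [h, zero_pow hn0] at hζ
    exact hv0 hζ.symm
  have hwne0 : ∀ β ∈ nthRootsFinset n (1:ℂ), β * ζ ≠ 0 := by
    intro β hmem
    exact mul_ne_zero (Polynomial.ne_zero_of_mem_nthRootsFinset one_ne_zero hmem) hζ0
  have hwre : ∀ β ∈ nthRootsFinset n (1:ℂ), (β * ζ).re < 1/2 := by
    intro β hmem
    exact re_lt_half (hβ β hmem).2.1 (hβ β hmem).2.2.2
  have hdenomβ : ∀ β ∈ nthRootsFinset n (1:ℂ), ∀ s : ℝ, 0 ≤ s → s ≤ 1 →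
      1 - β * ζ * (s:ℂ) ≠ 0 := by
    intro β hmem s h0 h1
    exact denom_ne (hwre β hmem) h0 h1
  -- the substituted function
  set G : ℝ → ℂ := fun t => Complex.log (1 - u * ((t ^ ((n:ℝ))⁻¹ : ℝ) : ℂ)) / (v⁻¹ - (t:ℂ))
    with hGdef
  -- denominator of G nonzero on [0,1]
  have hvden : ∀ t : ℝ, 0 ≤ t → t ≤ 1 → v⁻¹ - (t:ℂ) ≠ 0 := by
    intro t h0 h1 h
    have hvt : v⁻¹ = (t:ℂ) := sub_eq_zero.mp h
    have habs : (Complex.abs v)⁻¹ = t := by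
      rw [← map_inv₀, hvt, Complex.abs_ofReal, _root_.abs_of_nonneg h0]
    have hpos : 0 < Complex.abs v := AbsoluteValue.pos _ hv0
    have hprod : t * Complex.abs v = 1 := by
      rw [← habs]; field_simp
    have ht1 : t = 1 := by have hv1' : Complex.abs v ≤ 1 := hv1; nlinarith
    rw [ht1] at hvt
    apply hvne
    apply inv_eq_one.mp
    simpa using hvt
  -- continuity of G
  have hGcont : ContinuousOn G (Icc 0 1) := by
    apply ContinuousOn.div
    · apply ContinuousOn.clog
      · apply ContinuousOn.sub continuousOn_const
        apply ContinuousOn.mul continuousOn_const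
        apply Complex.continuous_ofReal.comp_continuousOn
        apply ContinuousOn.rpow_const continuousOn_id
        intro t ht
        right; positivity
      · intro t ht
        have h0 : 0 ≤ t ^ ((n:ℝ))⁻¹ := Real.rpow_nonneg ht.1 _
        have h1' : t ^ ((n:ℝ))⁻¹ ≤ 1 := Real.rpow_le_one ht.1 ht.2 (by positivity)
        exact num_slit habsu h0 h1'
    · fun_prop
    · intro t ht; exact hvden t ht.1 ht.2
  -- Step A : rewrite the integrand of F
  have hFeq : F ((n:ℂ))⁻¹ u v = ∫ t in (0:ℝ)..1, G t := by
    rw [F]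
    apply intervalIntegral.integral_congr_ae
    apply Eventually.of_forall
    intro t ht
    rw [Set.uIoc_of_le zero_le_one] at ht
    have htpos := ht.1
    have htpow : tpow ((n:ℂ))⁻¹ t = ((t ^ ((n:ℝ))⁻¹ : ℝ) : ℂ) := by
      rw [tpow, Real.rpow_def_of_pos htpos, Complex.ofReal_exp]
      congr 1
      push_cast
      ring
    rw [htpow]
  -- root helper
  have hroot : ∀ s : ℝ, 0 ≤ s → (s^n) ^ ((n:ℝ))⁻¹ = s := by
    intro s hs
    rw [← Real.rpow_natCast s n, ← Real.rpow_mul hs,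
      mul_inv_cancel₀ (Nat.cast_ne_zero.mpr hn0), Real.rpow_one]
  -- Step C : substitution t = s^n
  have hsub : ∫ t in (0:ℝ)..1, G t = ∫ s in (0:ℝ)..1, ((n:ℝ) * s^(n-1)) • G (s^n) := by
    have h := intervalIntegral.integral_comp_smul_deriv'' (a := (0:ℝ)) (b := 1)
      (f := fun s => s^n) (f' := fun s => (n:ℝ) * s^(n-1)) (g := G)
      (Continuous.continuousOn (by continuity))
      (fun x _ => (hasDerivAt_pow n x).hasDerivWithinAt)
      (Continuous.continuousOn (by continuity))
      (hGcont.mono ?_)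
    · simp only [Function.comp, zero_pow hn0, one_pow] at h
      exact h.symm
    · rintro _ ⟨s, hs, rfl⟩
      rw [uIcc_of_le zero_le_one] at hs
      exact ⟨pow_nonneg hs.1 n, pow_le_one₀ hs.1 hs.2⟩
  -- Step D : pointwise identity
  have hpoint : EqOn (fun s : ℝ => ((n:ℝ) * s^(n-1)) • G (s^n))
      (fun s : ℝ => ∑ β ∈ nthRootsFinset n (1:ℂ),
        Complex.log (1 - u*(s:ℂ)) * (β*ζ/(1 - β*ζ*(s:ℂ)))) (uIcc (0:ℝ) 1) := by
    intro s hs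
    rw [uIcc_of_le zero_le_one] at hs
    have hne : ∀ β ∈ nthRootsFinset n (1:ℂ), 1 - β * ζ * (s:ℂ) ≠ 0 :=
      fun β hb => hdenomβ β hb s hs.1 hs.2
    have hPF := partial_fractions hn ζ (s:ℂ) hne
    rw [hζ] at hPF
    have hprodne : (1:ℂ) - v * (s:ℂ)^n ≠ 0 := by
      have hp := prod_formula hn ζ (s:ℂ)
      rw [hζ] at hp
      rw [← hp]
      exact Finset.prod_ne_zero_iff.mpr hne
    have hGs : G (s^n) = Complex.log (1 - u*(s:ℂ)) * (v / (1 - v * (s:ℂ)^n)) := by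
      show Complex.log (1 - u * (((s^n) ^ ((n:ℝ))⁻¹ : ℝ) : ℂ)) / (v⁻¹ - ((s^n : ℝ):ℂ)) = _
      rw [hroot s hs.1]
      have hd' : v⁻¹ - ((s^n : ℝ):ℂ) ≠ 0 :=
        hvden (s^n) (pow_nonneg hs.1 n) (pow_le_one₀ hs.1 hs.2)
      rw [div_eq_iff hd']
      push_cast
      field_simp
    show ((n:ℝ) * s^(n-1)) • G (s^n) = ∑ β ∈ nthRootsFinset n (1:ℂ),
        Complex.log (1 - u*(s:ℂ)) * (β*ζ/(1 - β*ζ*(s:ℂ)))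
    rw [hGs, Complex.real_smul, ← Finset.mul_sum, hPF]
    push_cast
    field_simp
  rw [hFeq, hsub, intervalIntegral.integral_congr hpoint,
    intervalIntegral.integral_finset_sum
      (fun β hb => by
        apply ContinuousOn.intervalIntegrable
        rw [uIcc_of_le zero_le_one]
        exact contOn_main habsu (hwre β hb))]
  rw [Finset.sum_congr rfl (fun β hb =>
    key habsu (hβ β hb).2.1 (hβ β hb).2.2.1 (hwne0 β hb) (hβ β hb).2.2.2)]
  have hsplit : ∀ β ∈ nthRootsFinset n (1:ℂ),
      Li 2 u + Li 2 (β*ζ/(β*ζ-1)) - Li 2 ((u-β*ζ)/(1-β*ζ))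
        = Li 2 u + (Li 2 (β*ζ/(β*ζ-1)) - Li 2 ((u-β*ζ)/(1-β*ζ))) := fun β _ => by ring
  rw [Finset.sum_congr rfl hsplit, Finset.sum_add_distrib, Finset.sum_const,
    (Complex.isPrimitiveRoot_exp n hn0).card_nthRootsFinset, nsmul_eq_mul]
end

section
/- For every natural number k ≥ 1, one has ∫₀¹ log^k(1 − t)/(−1 − t) dt = (−1)^{k+1} · k! · Li_{k+1}(1/2); that is, F_k(1; 1, −1) = (−1)^{k+1} · k! · Li_{k+1}(1/2). In particular, for k = 2 this gives ∫₀¹ log²(1 − t)/(−1 − t) dt = −2·Li₃(1/2). -/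
open MeasureTheory

/-- The real polylogarithm `Li_s(x) = ∑_{n≥1} x^n / n^s`. -/
noncomputable def LiR (s : ℕ) (x : ℝ) : ℝ := ∑' n : ℕ, x ^ (n + 1) / ((n : ℝ) + 1) ^ s

section Aux
open Real Filter


-- integrability lemma, via |log u|^k ≤ (2k)^k u^{-1/2}
lemma logpow_bound (k : ℕ) {u : ℝ} (h0 : 0 < u) (h1 : u ≤ 1) :
    |Real.log u| ^ k ≤ (2*(k:ℝ))^k * u ^ (-(1/2) : ℝ) := by
  rcases Nat.eq_zero_or_pos k with rfl | hk
  · simpa using Real.one_le_rpow_of_pos_of_le_one_of_nonpos h0 h1 (by norm_num)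
  · have hlog : |Real.log u| = Real.log u⁻¹ := by
      rw [Real.log_inv, abs_of_nonpos (Real.log_nonpos h0.le h1)]
    have hc : (0:ℝ) < 1/(2*k) := by positivity
    have key : Real.log u⁻¹ ≤ 2*(k:ℝ) * u ^ (-(1/(2*(k:ℝ))) : ℝ) := by
      have h2 : Real.log (u ^ (-(1/(2*(k:ℝ))) : ℝ)) = (-(1/(2*(k:ℝ)))) * Real.log u :=
        Real.log_rpow h0 _
      have h3 : Real.log (u ^ (-(1/(2*(k:ℝ))) : ℝ)) ≤ u ^ (-(1/(2*(k:ℝ))) : ℝ) :=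
        (Real.log_le_sub_one_of_pos (Real.rpow_pos_of_pos h0 _)).trans (by linarith [Real.rpow_pos_of_pos h0 (-(1/(2*(k:ℝ))) : ℝ)])
      have hk' : (0:ℝ) < (k:ℝ) := by exact_mod_cast hk
      rw [Real.log_inv]
      calc -Real.log u = 2*(k:ℝ) * ((-(1/(2*(k:ℝ)))) * Real.log u) := by field_simp
        _ ≤ 2*(k:ℝ) * (u ^ (-(1/(2*(k:ℝ))) : ℝ)) := by
            rw [← h2]; exact mul_le_mul_of_nonneg_left h3 (by positivity)
    have hpow := pow_le_pow_left₀ (abs_nonneg (Real.log u)) (hlog ▸ key) k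
    refine hpow.trans_eq ?_
    rw [mul_pow, ← Real.rpow_natCast (u ^ (-(1/(2*(k:ℝ))) : ℝ)) k, ← Real.rpow_mul h0.le]
    congr 2
    have hk' : (0:ℝ) < (k:ℝ) := by exact_mod_cast hk
    field_simp

lemma intInt (n k : ℕ) :
    IntervalIntegrable (fun u => u ^ n * Real.log u ^ k) volume 0 1 := by
  have hg : IntervalIntegrable (fun u : ℝ => (2*(k:ℝ))^k * u ^ (-(1/2) : ℝ)) volume 0 1 :=
    (intervalIntegral.intervalIntegrable_rpow' (by norm_num)).const_mul _
  refine hg.mono_fun' ?_ ?_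
  · exact ((measurable_id.pow_const n).mul (Real.measurable_log.pow_const k)).aestronglyMeasurable
  · rw [Set.uIoc_of_le (by norm_num : (0:ℝ) ≤ 1)]
    filter_upwards [ae_restrict_mem measurableSet_Ioc] with u hu
    have h0 : 0 < u := hu.1
    have h1 : u ≤ 1 := hu.2
    have : ‖u ^ n * Real.log u ^ k‖ = u ^ n * |Real.log u| ^ k := by
      rw [norm_mul, norm_pow, norm_pow, Real.norm_eq_abs, Real.norm_eq_abs,
        abs_of_pos h0]
    rw [this]
    calc u ^ n * |Real.log u| ^ k ≤ 1 * |Real.log u| ^ k := by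
          apply mul_le_mul_of_nonneg_right (pow_le_one₀ h0.le h1) (by positivity)
      _ = |Real.log u| ^ k := one_mul _
      _ ≤ (2*(k:ℝ))^k * u ^ (-(1/2) : ℝ) := logpow_bound k h0 h1

lemma moment (n : ℕ) : ∀ k : ℕ, (∫ u in (0:ℝ)..1, u ^ n * Real.log u ^ k) =
    (-1)^k * (k.factorial : ℝ) / ((n:ℝ)+1)^(k+1) := by
  intro k
  induction k with
  | zero => simp [integral_pow]
  | succ k ih =>
    have hn : ((n:ℝ)+1) ≠ 0 := by positivity
    -- FTC with f u = u^(n+1) * log u ^ (k+1) / (n+1)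
    set f : ℝ → ℝ := fun u => u^(n+1) * Real.log u ^ (k+1) / ((n:ℝ)+1) with hf
    set f' : ℝ → ℝ := fun u => u ^ n * Real.log u ^ (k+1)
      + (((k:ℝ)+1)/((n:ℝ)+1)) * (u ^ n * Real.log u ^ k) with hf'
    have hderiv : ∀ u ∈ Set.Ioo (0:ℝ) 1, HasDerivAt f (f' u) u := by
      intro u hu
      have hu0 : u ≠ 0 := ne_of_gt hu.1
      have h1 : HasDerivAt (fun u : ℝ => u^(n+1)) ((n+1) * u^n) u := by
        simpa using hasDerivAt_pow (n+1) u
      have h2 : HasDerivAt (fun u : ℝ => Real.log u ^ (k+1))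
          ((k+1) * Real.log u ^ k * u⁻¹) u := by
        exact (hasDerivAt_pow (k+1) (Real.log u)).comp u (Real.hasDerivAt_log hu0) |>.congr_deriv (by push_cast; ring)
      have := (h1.mul h2).div_const ((n:ℝ)+1)
      refine this.congr_deriv ?_
      simp only [hf']
      field_simp
      ring
    have hint : IntervalIntegrable f' volume 0 1 :=
      (intInt n (k+1)).add ((intInt n k).const_mul _)
    have ha : Tendsto f (nhdsWithin 0 (Set.Ioi 0)) (nhds 0) := by
      have hr : (0:ℝ) < ((n:ℝ)+1)/((k:ℝ)+1) := by positivity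
      have base := (tendsto_log_mul_rpow_nhdsGT_zero hr).pow (k+1)
      have : Tendsto (fun u : ℝ => (Real.log u * u ^ (((n:ℝ)+1)/((k:ℝ)+1)))^(k+1) / ((n:ℝ)+1))
          (nhdsWithin 0 (Set.Ioi 0)) (nhds 0) := by
        simpa using base.div_const (((n:ℝ))+1)
      refine this.congr' ?_
      filter_upwards [self_mem_nhdsWithin] with u hu
      have hu0 : (0:ℝ) < u := hu
      rw [hf]
      simp only [mul_pow]
      rw [← Real.rpow_natCast (u ^ (((n:ℝ)+1)/((k:ℝ)+1))) (k+1), ← Real.rpow_mul hu0.le]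
      have : (((n:ℝ)+1)/((k:ℝ)+1)) * ((k:ℝ)+1) = ((n:ℝ)+1) := by
        field_simp
      push_cast
      rw [this, show ((n:ℝ)+1) = ((n+1:ℕ):ℝ) by push_cast; ring, Real.rpow_natCast]
      ring
    have hb : Tendsto f (nhdsWithin 1 (Set.Iio 1)) (nhds 0) := by
      have hc : ContinuousAt f 1 := by
        apply ContinuousAt.div_const
        exact (continuousAt_pow _ _).mul ((Real.continuousAt_log one_ne_zero).pow _)
      have : f 1 = 0 := by simp [hf]
      rw [← this]
      exact hc.continuousWithinAt.tendsto
    have key : (∫ u in (0:ℝ)..1, f' u) = 0 - 0 :=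
      intervalIntegral.integral_eq_sub_of_hasDerivAt_of_tendsto one_pos hderiv hint ha hb
    rw [hf'] at key
    rw [intervalIntegral.integral_add (intInt n (k+1)) ((intInt n k).const_mul _),
      intervalIntegral.integral_const_mul, ih] at key
    have : (∫ u in (0:ℝ)..1, u ^ n * Real.log u ^ (k+1))
        = - (((k:ℝ)+1)/((n:ℝ)+1)) * ((-1)^k * (k.factorial:ℝ) / ((n:ℝ)+1)^(k+1)) := by
      linarith [key]
    rw [this]
    rw [Nat.factorial_succ]
    push_cast
    field_simp
    ring

lemma momentIoc (n k : ℕ) : (∫ u in Set.Ioc (0:ℝ) 1, u ^ n * Real.log u ^ k) =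
    (-1)^k * (k.factorial : ℝ) / ((n:ℝ)+1)^(k+1) := by
  rw [← intervalIntegral.integral_of_le (by norm_num : (0:ℝ) ≤ 1)]
  exact moment n k

lemma main_int (k : ℕ) :
    (∫ t in (0:ℝ)..1, (Real.log (1 - t)) ^ k / (-1 - t)) =
      (-1 : ℝ) ^ (k + 1) * (k.factorial : ℝ) * LiR (k + 1) (1 / 2) := by
  -- substitution u = 1 - t
  have hsub : (∫ t in (0:ℝ)..1, (Real.log (1 - t)) ^ k / (-1 - t)) =
      ∫ u in (0:ℝ)..1, Real.log u ^ k / (u - 2) := by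
    have := intervalIntegral.integral_comp_sub_left (a := 0) (b := 1) (fun u => Real.log u ^ k / (u - 2)) 1
    simp only [sub_self, sub_zero] at this
    rw [← this]
    congr 1
    ext t
    congr 1
    ring
  rw [hsub, intervalIntegral.integral_of_le (by norm_num : (0:ℝ) ≤ 1)]
  set F : ℕ → ℝ → ℝ := fun n u => -((1/2)^(n+1)) * (u ^ n * Real.log u ^ k) with hF
  have hptwise : ∀ u ∈ Set.Ioc (0:ℝ) 1, Real.log u ^ k / (u - 2) = ∑' n, F n u := by
    intro u hu
    have hr0 : (0:ℝ) ≤ u/2 := by linarith [hu.1]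
    have hr1 : u/2 < 1 := by linarith [hu.2]
    have hgeo : ∑' n : ℕ, (u/2)^n = (1 - u/2)⁻¹ := tsum_geometric_of_lt_one hr0 hr1
    have : ∑' n, F n u = (-(1/2) * Real.log u ^ k) * ∑' n : ℕ, (u/2)^n := by
      rw [← tsum_mul_left]
      congr 1; ext n
      rw [hF]
      simp only
      field_simp
      ring
    rw [this, hgeo]
    have h2 : (1 : ℝ) - u/2 ≠ 0 := by intro h; nlinarith
    have h3 : u - 2 ≠ 0 := by intro h; nlinarith [hu.2]
    have h5 : (2:ℝ) - u ≠ 0 := fun h => h3 (by linarith)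
    have h4 : ((1:ℝ) - u/2)⁻¹ = -2 * (u - 2)⁻¹ := by
      rw [show (1:ℝ) - u/2 = -(u-2)/2 by ring]
      field_simp
    rw [h4, div_eq_mul_inv]
    ring
  rw [setIntegral_congr_fun measurableSet_Ioc hptwise]
  rw [← MeasureTheory.integral_tsum_of_summable_integral_norm]
  · -- compute the sum of integrals
    have hterm : ∀ n : ℕ, (∫ u in Set.Ioc (0:ℝ) 1, F n u)
        = (-1 : ℝ)^(k+1) * (k.factorial : ℝ) * ((1/2:ℝ)^(n+1) / ((n:ℝ)+1)^(k+1)) := by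
      intro n
      rw [hF]
      simp only
      rw [integral_const_mul, momentIoc]
      ring
    rw [tsum_congr hterm, tsum_mul_left]
    simp only [LiR]
  · intro n
    exact ((intInt n k).1).const_mul _
  · -- summability of integrals of norms
    have hnorm : ∀ n : ℕ, (∫ u in Set.Ioc (0:ℝ) 1, ‖F n u‖)
        = (1/2:ℝ)^(n+1) * ((k.factorial : ℝ) / ((n:ℝ)+1)^(k+1)) := by
      intro n
      have : ∀ u ∈ Set.Ioc (0:ℝ) 1, ‖F n u‖ = (1/2:ℝ)^(n+1) * ((-1)^k * (u ^ n * Real.log u ^ k)) := by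
        intro u hu
        rw [hF]
        simp only [norm_mul, norm_neg, norm_pow, Real.norm_eq_abs]
        rw [abs_of_pos hu.1, abs_of_pos (by norm_num : (0:ℝ) < (1:ℝ)/2),
          abs_of_nonpos (Real.log_nonpos hu.1.le hu.2), neg_pow]
        ring
      rw [setIntegral_congr_fun measurableSet_Ioc this, integral_const_mul, integral_const_mul,
        momentIoc]
      have hsq : ((-1:ℝ)^k) * ((-1:ℝ)^k) = 1 := by
        rw [← pow_add]; exact Even.neg_one_pow ⟨k, rfl⟩
      calc (1/2:ℝ)^(n+1) * ((-1:ℝ)^k * ((-1:ℝ)^k * (k.factorial:ℝ) / ((n:ℝ)+1)^(k+1)))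
          = (((-1:ℝ)^k) * ((-1:ℝ)^k)) * ((1/2:ℝ)^(n+1) * ((k.factorial:ℝ) / ((n:ℝ)+1)^(k+1))) := by
            ring
        _ = (1/2:ℝ)^(n+1) * ((k.factorial:ℝ) / ((n:ℝ)+1)^(k+1)) := by rw [hsq, one_mul]
    have hg : Summable (fun n : ℕ => (k.factorial : ℝ) * (1/2:ℝ)^(n+1)) := by
      apply Summable.mul_left
      exact (((summable_geometric_of_lt_one (r := (1:ℝ)/2) (by norm_num) (by norm_num)).mul_left ((1:ℝ)/2)).congr
        (fun n => by rw [pow_succ]; ring))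
    refine Summable.congr ?_ (fun n => (hnorm n).symm)
    refine Summable.of_nonneg_of_le (fun n => by positivity) (fun n => ?_) hg
    have h1 : (1:ℝ) ≤ ((n:ℝ)+1)^(k+1) := one_le_pow₀ (by have := Nat.cast_nonneg (α := ℝ) n; linarith)
    have h2 : (k.factorial : ℝ) / ((n:ℝ)+1)^(k+1) ≤ (k.factorial : ℝ) :=
      div_le_self (by positivity) h1
    calc (1/2:ℝ)^(n+1) * ((k.factorial : ℝ) / ((n:ℝ)+1)^(k+1))
        ≤ (1/2:ℝ)^(n+1) * (k.factorial : ℝ) :=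
          mul_le_mul_of_nonneg_left h2 (by positivity)
      _ = (k.factorial : ℝ) * (1/2:ℝ)^(n+1) := by ring

end Aux

theorem statement18 :
    (∀ k : ℕ, 1 ≤ k →
      (∫ t in (0:ℝ)..1, (Real.log (1 - t)) ^ k / (-1 - t)) =
        (-1 : ℝ) ^ (k + 1) * (k.factorial : ℝ) * LiR (k + 1) (1 / 2)) ∧
    (∫ t in (0:ℝ)..1, (Real.log (1 - t)) ^ 2 / (-1 - t)) = -2 * LiR 3 (1 / 2) := by
  refine ⟨fun k _ => main_int k, ?_⟩
  have h := main_int 2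
  norm_num at h
  rw [h]; ring
end

section
/- Let k ≥ 1 be a natural number and let u ∈ 𝔻' be a complex number. Then F_k(1; u, u) = ∫₀¹ log^k(1 − u·t)/(u^{−1} − t) dt = −(1/(k+1))·log^{k+1}(1 − u). Moreover, for arbitrary u, v ∈ ℂ \ ([1,∞) ∪ {0}) with u ≠ v, assuming that the numbers v(u−1)/(u−v) and v/(v−u) lie in the open unit disc and that 1−u does not lie on the nonpositive real axis, one has F_k(1; u, v) = ∑_{j=1}^{k+1} (−1)^{j−1} · (k!/(k+1−j)!) · log^{k+1−j}(1−u) · Li_j(v(u−1)/(u−v)) + (−1)^{k+1} · k! · Li_{k+1}(v/(v−u)). -/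
open Complex MeasureTheory Filter Set

/-- `F_k(1;u,v) = ∫₀¹ log^k(1 − u t)/(v⁻¹ − t) dt`. -/
noncomputable def Fk1 (k : ℕ) (u v : ℂ) : ℂ :=
  ∫ t in (0:ℝ)..1, (Complex.log (1 - u * (t : ℂ))) ^ k / (v⁻¹ - (t : ℂ))

lemma nat_norm_ge (n s : ℕ) : (1:ℝ) ≤ ‖((n:ℂ)+1)^s‖ := by
  rw [norm_pow]
  have h : ((n:ℂ)+1) = ((n+1:ℕ):ℂ) := by push_cast; ring
  rw [h, Complex.norm_natCast]
  exact one_le_pow₀ (by exact_mod_cast Nat.one_le_iff_ne_zero.mpr (Nat.succ_ne_zero n))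

lemma term_norm_le' (s m : ℕ) (z : ℂ) (n : ℕ) : ‖z ^ m / ((n : ℂ) + 1) ^ s‖ ≤ ‖z‖ ^ m := by
  rw [norm_div, norm_pow]
  exact div_le_self (by positivity) (nat_norm_ge n s)

lemma term_norm_le (s : ℕ) (z : ℂ) (n : ℕ) : ‖z ^ n / ((n : ℂ) + 1) ^ s‖ ≤ ‖z‖ ^ n :=
  term_norm_le' s n z n

lemma li_summable {s : ℕ} {z : ℂ} (hz : ‖z‖ < 1) :
    Summable (fun n : ℕ => z ^ (n+1) / ((n : ℂ) + 1) ^ s) := by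
  apply Summable.of_norm
  apply Summable.of_nonneg_of_le (fun n => norm_nonneg _) (fun n => term_norm_le' s (n+1) z n)
  exact ((summable_geometric_of_lt_one (norm_nonneg z) hz).mul_left ‖z‖).congr
    (fun n => by rw [pow_succ]; ring)

lemma hasDerivAt_Li (s : ℕ) {z : ℂ} (hz : ‖z‖ < 1) :
    HasDerivAt (Li (s+1)) (∑' n : ℕ, z ^ n / ((n : ℂ) + 1) ^ s) z := by
  set r : ℝ := (1 + ‖z‖) / 2 with hrdef
  have hr1 : r < 1 := by rw [hrdef]; linarith
  have hr0 : (0:ℝ) ≤ r := by positivity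
  have hzr : z ∈ Metric.ball (0:ℂ) r := by
    simp only [Metric.mem_ball, dist_zero_right]; rw [hrdef]; linarith
  apply hasDerivAt_of_tendstoUniformlyOn (l := (atTop : Filter ℕ)) (f := fun N (x:ℂ) => ∑ n ∈ Finset.range N,
      x ^ (n+1) / ((n:ℂ)+1)^(s+1))
    (f' := fun N (x:ℂ) => ∑ n ∈ Finset.range N, x ^ n / ((n:ℂ)+1)^s)
    Metric.isOpen_ball ?_ ?_ ?_ hzr
  · apply tendstoUniformlyOn_tsum_nat (u := fun n => r ^ n)
      (summable_geometric_of_lt_one hr0 hr1)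
    intro n x hx
    calc ‖x ^ n / ((n:ℂ)+1)^s‖ ≤ ‖x‖ ^ n := term_norm_le s x n
      _ ≤ r ^ n := by
          apply pow_le_pow_left₀ (norm_nonneg x)
          rw [Metric.mem_ball, dist_zero_right] at hx
          exact hx.le
  · filter_upwards with N x _
    apply HasDerivAt.fun_sum
    intro n _
    have h := (hasDerivAt_pow (n+1) x).div_const (((n:ℂ)+1)^(s+1))
    refine h.congr_deriv ?_
    have hne : ((n:ℂ)+1) ≠ 0 := Nat.cast_add_one_ne_zero n
    rw [pow_succ]
    push_cast
    field_simp
  · intro x hx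
    have hx1 : ‖x‖ < 1 := by
      have : ‖x‖ < r := by simpa [dist_zero_right] using hx
      linarith
    exact (li_summable (s := s+1) hx1).hasSum.tendsto_sum_nat


lemma not_one_of (h : ¬((u:ℂ).im = 0 ∧ 1 ≤ u.re)) {t : ℝ} (ht : t ∈ Icc (0:ℝ) 1) :
    u * (t:ℂ) ≠ 1 := by
  intro he
  have him : u.im * t = 0 := by simpa using congrArg Complex.im he
  have hre : u.re * t = 1 := by simpa using congrArg Complex.re he
  have ht0 : (0:ℝ) < t := by
    rcases lt_or_eq_of_le ht.1 with h0 | h0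
    · exact h0
    · rw [← h0] at hre; simp at hre
  refine h ⟨?_, ?_⟩
  · rcases mul_eq_zero.mp him with h0 | h0
    · exact h0
    · exact absurd h0 (ne_of_gt ht0)
  · nlinarith [ht.2]

lemma slit_of (h : ¬((u:ℂ).im = 0 ∧ 1 ≤ u.re)) {t : ℝ} (ht : t ∈ Icc (0:ℝ) 1) :
    (1 - u * (t:ℂ)) ∈ slitPlane := by
  rw [Complex.mem_slitPlane_iff]
  have hre : (1 - u * (t:ℂ)).re = 1 - u.re * t := by simp
  have him : (1 - u * (t:ℂ)).im = -(u.im * t) := by simp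
  by_cases h0 : u.im = 0
  · left
    have : u.re < 1 := by
      by_contra hc
      exact h ⟨h0, le_of_not_gt hc⟩
    rw [hre]
    rcases le_or_gt u.re 0 with h1 | h1
    · nlinarith [ht.1, ht.2]
    · nlinarith [ht.1, ht.2]
  · rcases lt_or_eq_of_le ht.1 with h1 | h1
    · right; rw [him]; intro hc
      rcases mul_eq_zero.mp (neg_eq_zero.mp hc) with h2 | h2
      · exact h0 h2
      · exact h1.ne' h2
    · left; rw [hre, ← h1]; norm_num

lemma hure_of_disc {u : ℂ} (h1 : ‖u‖ ≤ 1) (h2 : u ≠ 1) :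
    ¬(u.im = 0 ∧ 1 ≤ u.re) := by
  rintro ⟨him, hre⟩
  have h3 : |u.re| ≤ ‖u‖ := Complex.abs_re_le_norm u
  have h5 : u.re ≤ 1 := le_trans (le_abs_self _) (h3.trans h1)
  have h4 : u.re = 1 := le_antisymm h5 hre
  exact h2 (Complex.ext (by simp [h4]) (by simp [him]))

lemma part1 (k : ℕ) (u : ℂ) (hu0 : u ≠ 0) (hure : ¬(u.im = 0 ∧ 1 ≤ u.re)) :
    Fk1 k u u = -(1 / ((k : ℂ) + 1)) * (Complex.log (1 - u)) ^ (k + 1) := by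
  have huicc : uIcc (0:ℝ) 1 = Icc (0:ℝ) 1 := uIcc_of_le zero_le_one
  have key : ∀ t ∈ uIcc (0:ℝ) 1,
      HasDerivAt (fun t : ℝ => -(1 / ((k : ℂ) + 1)) * (Complex.log (1 - u * (t:ℂ))) ^ (k + 1))
        ((Complex.log (1 - u * (t:ℂ))) ^ k / (u⁻¹ - (t:ℂ))) t := by
    intro t ht
    rw [huicc] at ht
    have hslit := slit_of hure ht
    have hne : (1 - u * (t:ℂ)) ≠ 0 := slitPlane_ne_zero hslit
    have h1 : HasDerivAt (fun w : ℂ => 1 - u * w) (-u) (t:ℂ) := by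
      simpa using ((hasDerivAt_id ((t:ℝ):ℂ)).const_mul u).const_sub 1
    have hlog : HasDerivAt (fun w : ℂ => Complex.log (1 - u * w))
        ((1 - u * (t:ℂ))⁻¹ * (-u)) (t:ℂ) := by
      simpa [Function.comp_def] using (Complex.hasDerivAt_log hslit).comp (t:ℂ) h1
    have hpow := (hlog.fun_pow (k+1)).const_mul (-(1 / ((k : ℂ) + 1)))
    have := hpow.comp_ofReal
    convert this using 1
    have hk1 : ((k:ℂ) + 1) ≠ 0 := Nat.cast_add_one_ne_zero k
    have hut : u⁻¹ - (t:ℂ) ≠ 0 := by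
      intro hc
      apply not_one_of hure ht
      have : (t:ℂ) = u⁻¹ := by linear_combination -hc
      rw [this, mul_inv_cancel₀ hu0]
    push_cast
    rw [div_eq_iff hut]
    field_simp
  have hint : IntervalIntegrable
      (fun t : ℝ => (Complex.log (1 - u * (t:ℂ))) ^ k / (u⁻¹ - (t:ℂ))) volume 0 1 := by
    apply ContinuousOn.intervalIntegrable
    rw [huicc]
    apply ContinuousOn.div
    · apply ContinuousOn.pow
      intro t ht
      have hin : ContinuousAt (fun x : ℝ => 1 - u * (x:ℂ)) t := by fun_prop
      exact (ContinuousAt.comp (g := Complex.log) (f := fun x : ℝ => 1 - u * (x:ℂ))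
        (continuousAt_clog (slit_of hure ht)) hin).continuousWithinAt
    · fun_prop
    · intro t ht hc
      apply not_one_of hure ht
      have : (t:ℂ) = u⁻¹ := by linear_combination -hc
      rw [this, mul_inv_cancel₀ hu0]
  rw [Fk1, intervalIntegral.integral_eq_sub_of_hasDerivAt key hint]
  norm_num [Complex.log_one, zero_pow (Nat.succ_ne_zero k)]
/-- geometric sum -/
lemma D_zero {z : ℂ} (hz : ‖z‖ < 1) : ∑' n : ℕ, z ^ n / ((n : ℂ) + 1) ^ 0 = (1 - z)⁻¹ := by
  simp only [pow_zero, div_one]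
  exact tsum_geometric_of_norm_lt_one hz

lemma Li_eq_mul (s : ℕ) (z : ℂ) :
    Li s z = z * ∑' n : ℕ, z ^ n / ((n : ℂ) + 1) ^ s := by
  rw [← tsum_mul_left]
  exact tsum_congr fun n => by rw [pow_succ]; ring

noncomputable def cc (k j : ℕ) : ℂ :=
  (-1 : ℂ) ^ (j - 1) * ((k.factorial : ℂ) / (((k + 1 - j).factorial : ℂ)))

lemma cc_one (k : ℕ) : cc k 1 = 1 := by
  simp [cc, Nat.add_sub_cancel]
  exact k.factorial_ne_zero

lemma cc_top (k : ℕ) : cc k (k+1) = (-1:ℂ)^k * k.factorial := by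
  simp [cc, Nat.add_sub_cancel]

lemma cc_succ (k i : ℕ) (hik : i < k) :
    cc k (i+2) = -(cc k (i+1) * ((k - i : ℕ) : ℂ)) := by
  have h1 : k + 1 - (i+1) = k - i := by omega
  have h2 : k + 1 - (i+2) = k - i - 1 := by omega
  have h3 : k - i = (k - i - 1) + 1 := by omega
  have h4 : (k - i).factorial = (k - i) * (k - i - 1).factorial := by
    rw [h3, Nat.factorial_succ, ← h3]
  rw [cc, cc, h1, h2]
  simp only [Nat.add_sub_cancel]
  rw [h4]
  have hf : ((k - i - 1).factorial : ℂ) ≠ 0 := Nat.cast_ne_zero.mpr (Nat.factorial_ne_zero _)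
  have hki : ((k - i : ℕ) : ℂ) ≠ 0 := Nat.cast_ne_zero.mpr (by omega)
  push_cast
  field_simp
  ring

noncomputable def GG (k : ℕ) (u v w : ℂ) : ℂ :=
  ∑ j ∈ Finset.Icc 1 (k+1),
    cc k j * ((Complex.log (1 - u * w)) ^ (k + 1 - j) * Li j (v * (u * w - 1) / (u - v)))

lemma part2 (k : ℕ) (hk : 1 ≤ k) (u v : ℂ)
    (hu0 : u ≠ 0) (hure : ¬(u.im = 0 ∧ 1 ≤ u.re))
    (hv0 : v ≠ 0) (hvre : ¬(v.im = 0 ∧ 1 ≤ v.re))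
    (huv : u ≠ v)
    (h1 : ‖v * (u - 1) / (u - v)‖ < 1)
    (h2 : ‖v / (v - u)‖ < 1)
    (h3 : ¬((1 - u).im = 0 ∧ (1 - u).re ≤ 0)) :
    Fk1 k u v =
      (∑ j ∈ Finset.Icc 1 (k + 1),
        (-1 : ℂ) ^ (j - 1) * ((k.factorial : ℂ) / ((k + 1 - j).factorial : ℂ)) *
          (Complex.log (1 - u)) ^ (k + 1 - j) *
          Li j (v * (u - 1) / (u - v)))
        + (-1 : ℂ) ^ (k + 1) * (k.factorial : ℂ) * Li (k + 1) (v / (v - u)) := by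
  have huv' : u - v ≠ 0 := sub_ne_zero.mpr huv
  have hvu' : v - u ≠ 0 := sub_ne_zero.mpr (Ne.symm huv)
  have huicc : uIcc (0:ℝ) 1 = Icc (0:ℝ) 1 := uIcc_of_le zero_le_one
  -- endpoint values of Z
  have hZ0eq : v * (u * (0:ℂ) - 1) / (u - v) = v / (v - u) := by field_simp; ring
  have hZ1eq : v * (u * (1:ℂ) - 1) / (u - v) = v * (u - 1) / (u - v) := by rw [mul_one]
  have hZa : ∀ t ∈ Icc (0:ℝ) 1, ‖v * (u * (t:ℂ) - 1) / (u - v)‖ < 1 := by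
    intro t ht
    have he : v * (u * (t:ℂ) - 1) / (u - v)
        = (1 - (t:ℂ)) * (v / (v - u)) + (t:ℂ) * (v * (u - 1) / (u - v)) := by
      field_simp
      ring
    rw [he]
    have e1 : ‖(1 - (t:ℂ))‖ = 1 - t := by
      rw [show (1 - (t:ℂ)) = (((1 - t : ℝ)):ℂ) by push_cast; ring, Complex.norm_real, Real.norm_eq_abs,
        _root_.abs_of_nonneg (by linarith [ht.2])]
    have e2 : ‖(t:ℂ)‖ = t := by
      rw [Complex.norm_real, Real.norm_eq_abs, _root_.abs_of_nonneg ht.1]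
    have hb1 : ‖v / (v - u)‖ < 1 := h2
    have hb2 : ‖v * (u - 1) / (u - v)‖ < 1 := h1
    calc ‖(1 - (t:ℂ)) * (v / (v - u)) + (t:ℂ) * (v * (u - 1) / (u - v))‖
        ≤ ‖(1 - (t:ℂ)) * (v / (v - u))‖ + ‖(t:ℂ) * (v * (u - 1) / (u - v))‖ := norm_add_le _ _
      _ = (1 - t) * ‖v / (v - u)‖ + t * ‖v * (u - 1) / (u - v)‖ := by
          rw [norm_mul, norm_mul, e1, e2]
      _ ≤ (1 - t) * max ‖v / (v - u)‖ ‖v * (u - 1) / (u - v)‖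
            + t * max ‖v / (v - u)‖ ‖v * (u - 1) / (u - v)‖ :=
          add_le_add (mul_le_mul_of_nonneg_left (le_max_left _ _) (by linarith [ht.2]))
            (mul_le_mul_of_nonneg_left (le_max_right _ _) ht.1)
      _ = max ‖v / (v - u)‖ ‖v * (u - 1) / (u - v)‖ := by ring
      _ < 1 := max_lt hb1 hb2
  have hZne : ∀ t ∈ Icc (0:ℝ) 1, v * (u * (t:ℂ) - 1) / (u - v) ≠ 0 := by
    intro t ht hc
    rw [div_eq_zero_iff] at hc
    rcases hc with hc | hc
    · rcases mul_eq_zero.mp hc with hc | hc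
      · exact hv0 hc
      · exact not_one_of hure ht (by linear_combination hc)
    · exact huv' hc
  -- derivative of Z
  have hZd : ∀ w : ℂ, HasDerivAt (fun w => v * (u * w - 1) / (u - v)) (u * v / (u - v)) w := by
    intro w
    have h := (((hasDerivAt_id w).const_mul u).sub_const 1).const_mul v |>.div_const (u - v)
    refine h.congr_deriv ?_
    ring
  -- main derivative computation
  have key : ∀ t ∈ uIcc (0:ℝ) 1,
      HasDerivAt (fun t : ℝ => GG k u v (t:ℂ))
        ((Complex.log (1 - u * (t:ℂ))) ^ k / (v⁻¹ - (t:ℂ))) t := by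
    intro t ht
    rw [huicc] at ht
    have hslit := slit_of hure ht
    have hne : (1 - u * (t:ℂ)) ≠ 0 := slitPlane_ne_zero hslit
    set l : ℂ := Complex.log (1 - u * (t:ℂ)) with hl
    set l' : ℂ := (1 - u * (t:ℂ))⁻¹ * (-u) with hl'
    set ζ : ℂ := v * (u * (t:ℂ) - 1) / (u - v) with hζ
    set z' : ℂ := u * v / (u - v) with hz'
    have hζa : ‖ζ‖ < 1 := hZa t ht
    have hζ0 : ζ ≠ 0 := hZne t ht
    have hLd : HasDerivAt (fun w : ℂ => Complex.log (1 - u * w)) l' (t:ℂ) := by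
      have h1 : HasDerivAt (fun w : ℂ => 1 - u * w) (-u) (t:ℂ) := by
        simpa using ((hasDerivAt_id ((t:ℝ):ℂ)).const_mul u).const_sub 1
      simpa [Function.comp_def, hl'] using (Complex.hasDerivAt_log hslit).comp (t:ℂ) h1
    have hGd : HasDerivAt (fun w : ℂ => GG k u v w)
        (∑ j ∈ Finset.Icc 1 (k+1), cc k j *
          (((↑(k+1-j) * l ^ (k+1-j-1) * l') * Li j ζ)
            + l ^ (k+1-j) * ((∑' n : ℕ, ζ ^ n / ((n:ℂ)+1)^(j-1)) * z'))) (t:ℂ) := by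
      apply HasDerivAt.fun_sum
      intro j hj
      have hj1 : 1 ≤ j := (Finset.mem_Icc.mp hj).1
      obtain ⟨s, rfl⟩ : ∃ s, j = s + 1 := ⟨j - 1, by omega⟩
      have hLi : HasDerivAt (fun w : ℂ => Li (s+1) (v * (u * w - 1) / (u - v)))
          ((∑' n : ℕ, ζ ^ n / ((n:ℂ)+1)^s) * z') (t:ℂ) := by
        simpa [Function.comp_def] using (hasDerivAt_Li s hζa).comp (t:ℂ) (hZd (t:ℂ))
      have hs1 : s + 1 - 1 = s := by omega
      rw [hs1]
      exact ((hLd.fun_pow (k+1-(s+1))).mul hLi).const_mul (cc k (s+1))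
    have hvt : (1 : ℂ) - v * (t:ℂ) ≠ 0 := by
      intro hc; exact not_one_of hvre ht (by linear_combination -hc)
    have hvinv : v⁻¹ - (t:ℂ) ≠ 0 := by
      intro hc
      apply not_one_of hvre ht
      have : (t:ℂ) = v⁻¹ := by linear_combination -hc
      rw [this, mul_inv_cancel₀ hv0]
    have hζ1 : (1:ℂ) - ζ ≠ 0 := by
      intro hc
      have hζeq : ζ = 1 := by linear_combination -hc
      rw [hζeq] at hζa; simp at hζa
    have hkey1 : ζ * l' = z' := by rw [hζ, hl', hz']; field_simp; ring
    have halg : (∑ j ∈ Finset.Icc 1 (k+1), cc k j *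
          (((↑(k+1-j) * l ^ (k+1-j-1) * l') * Li j ζ)
            + l ^ (k+1-j) * ((∑' n : ℕ, ζ ^ n / ((n:ℂ)+1)^(j-1)) * z')))
        = l ^ k / (v⁻¹ - (t:ℂ)) := by
      set a : ℕ → ℂ := fun i =>
        cc k (i+1) * ((k - i : ℕ) : ℂ) * l ^ (k-i-1) * l' * Li (i+1) ζ with ha
      rw [show Finset.Icc 1 (k+1) = Finset.Ico 1 (k+2) from by rw [← Finset.Ico_add_one_right_eq_Icc]; rfl,
        Finset.sum_Ico_eq_sum_range]
      rw [show k + 2 - 1 = k + 1 from rfl, Finset.sum_range_succ']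
      have hterm : ∀ i ∈ Finset.range k,
          cc k (1+(i+1)) * (((↑(k+1-(1+(i+1))) * l ^ (k+1-(1+(i+1))-1) * l') * Li (1+(i+1)) ζ)
            + l ^ (k+1-(1+(i+1))) * ((∑' n : ℕ, ζ ^ n / ((n:ℂ)+1)^((1+(i+1))-1)) * z'))
          = a (i+1) - a i := by
        intro i hi
        have hik : i < k := Finset.mem_range.mp hi
        have hD : (∑' n : ℕ, ζ ^ n / ((n:ℂ)+1)^(i+1)) * z' = Li (i+1) ζ * l' := by
          rw [← hkey1, Li_eq_mul (i+1) ζ]; ring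
        simp only [ha, show (1:ℕ) + (i+1) = i + 2 from by omega,
          show i + 1 + 1 = i + 2 from by omega,
          show k + 1 - (i+2) = k - i - 1 from by omega,
          show (i+2) - 1 = i + 1 from by omega,
          show k - (i+1) = k - i - 1 from by omega,
          show k - i - 1 - 1 = k - i - 2 from by omega]
        rw [hD, cc_succ k i hik]
        ring
      rw [Finset.sum_congr rfl hterm, Finset.sum_range_sub]
      have hak : a k = 0 := by
        rw [ha]; simp
      have hD0 : (∑' n : ℕ, ζ ^ n / ((n:ℂ)+1)^((1+0)-1)) * z' = (1 - ζ)⁻¹ * z' := by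
        rw [show (1:ℕ) + 0 - 1 = 0 from rfl, D_zero hζa]
      have hterm1 : cc k (1+0) * (((↑(k+1-(1+0)) * l ^ (k+1-(1+0)-1) * l') * Li (1+0) ζ)
            + l ^ (k+1-(1+0)) * ((∑' n : ℕ, ζ ^ n / ((n:ℂ)+1)^((1+0)-1)) * z'))
          = a 0 + l ^ k * ((1 - ζ)⁻¹ * z') := by
        rw [hD0]
        simp only [ha, show k + 1 - (1+0) = k from by omega,
          show (1:ℕ) + 0 = 1 from rfl, show k - 0 = k from by omega,
          show 0 + 1 = 1 from rfl, cc_one]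
        ring
      rw [hterm1, hak]
      have hfin : (1 - ζ)⁻¹ * z' = (v⁻¹ - (t:ℂ))⁻¹ := by
        have h5 : (1 - ζ) = u * (1 - v * (t:ℂ)) / (u - v) := by
          rw [hζ]; field_simp; ring
        rw [h5, hz']
        field_simp
      rw [hfin, div_eq_mul_inv]
      ring
    have := hGd.comp_ofReal
    rwa [halg] at this
  -- integrability
  have hint : IntervalIntegrable
      (fun t : ℝ => (Complex.log (1 - u * (t:ℂ))) ^ k / (v⁻¹ - (t:ℂ))) volume 0 1 := by
    apply ContinuousOn.intervalIntegrable
    rw [huicc]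
    apply ContinuousOn.div
    · apply ContinuousOn.pow
      intro t ht
      have hin : ContinuousAt (fun x : ℝ => 1 - u * (x:ℂ)) t := by fun_prop
      exact (ContinuousAt.comp (g := Complex.log) (f := fun x : ℝ => 1 - u * (x:ℂ))
        (continuousAt_clog (slit_of hure ht)) hin).continuousWithinAt
    · fun_prop
    · intro t ht hc
      apply not_one_of hvre ht
      have : (t:ℂ) = v⁻¹ := by linear_combination -hc
      rw [this, mul_inv_cancel₀ hv0]
  rw [Fk1, intervalIntegral.integral_eq_sub_of_hasDerivAt key hint]
  have hG1 : GG k u v 1 = ∑ j ∈ Finset.Icc 1 (k + 1),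
      (-1 : ℂ) ^ (j - 1) * ((k.factorial : ℂ) / ((k + 1 - j).factorial : ℂ)) *
        (Complex.log (1 - u)) ^ (k + 1 - j) * Li j (v * (u - 1) / (u - v)) := by
    rw [GG]
    apply Finset.sum_congr rfl
    intro j hj
    simp only [mul_one, cc]
    ring
  have hG0 : GG k u v 0 = (-1:ℂ)^k * (k.factorial : ℂ) * Li (k+1) (v / (v - u)) := by
    rw [GG]
    rw [Finset.sum_eq_single_of_mem (k+1) (Finset.mem_Icc.mpr ⟨by omega, le_refl _⟩)]
    · rw [hZ0eq, cc_top]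
      norm_num [Complex.log_one]
    · intro j hj hjne
      have hne0 : k + 1 - j ≠ 0 := by
        have := (Finset.mem_Icc.mp hj).2
        omega
      norm_num [Complex.log_one, zero_pow hne0]
  rw [Complex.ofReal_one, Complex.ofReal_zero, hG1, hG0, pow_succ]
  ring

theorem statement19 (k : ℕ) (hk : 1 ≤ k) (u : ℂ)
    (hu : u ≠ 0 ∧ ‖u‖ ≤ 1 ∧ u ≠ 1) :
    Fk1 k u u = -(1 / ((k : ℂ) + 1)) * (Complex.log (1 - u)) ^ (k + 1) ∧
    (∀ u' v' : ℂ,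
      u' ≠ 0 → ¬(u'.im = 0 ∧ 1 ≤ u'.re) →
      v' ≠ 0 → ¬(v'.im = 0 ∧ 1 ≤ v'.re) →
      u' ≠ v' →
      ‖v' * (u' - 1) / (u' - v')‖ < 1 →
      ‖v' / (v' - u')‖ < 1 →
      ¬((1 - u').im = 0 ∧ (1 - u').re ≤ 0) →
      Fk1 k u' v' =
        (∑ j ∈ Finset.Icc 1 (k + 1),
          (-1 : ℂ) ^ (j - 1) * ((k.factorial : ℂ) / ((k + 1 - j).factorial : ℂ)) *
            (Complex.log (1 - u')) ^ (k + 1 - j) *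
            Li j (v' * (u' - 1) / (u' - v')))
          + (-1 : ℂ) ^ (k + 1) * (k.factorial : ℂ) * Li (k + 1) (v' / (v' - u'))) := by
  obtain ⟨hu0, habs, hu1⟩ := hu
  refine ⟨part1 k u hu0 (hure_of_disc habs hu1), ?_⟩
  intro u' v' h1 h2 h3 h4 h5 h6 h7 h8
  exact part2 k hk u' v' h1 h2 h3 h4 h5 h6 h7 h8
end
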